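/- Let Λ be a finitely aligned k-graph and {r_λ : λ ∈ Λ} a Toeplitz–Cuntz–Krieger Λ-family in a C*-algebra. Then for each vertex v and each nonempty finite set F ⊆ vΛ, ∏_{λ∈F}(r_v − r_λ r_λ*) = r_v + Σ_{∅ ≠ G ⊆ F} Σ_{λ ∈ MCE(G)} (−1)^{|G|} r_λ r_λ*. -/

import Mathlib

/-- A `k`-graph: a countable small category `Λ` together with a degree functor
`d : Λ → ℕᵏ` satisfying the unique factorisation property.  Morphisms are called
paths; `comp μ ν` is the composite `μν`, only meaningful when `s μ = r ν`. -/
structure KGraph (k : ℕ) where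
  Path : Type
  Obj : Type
  pathCountable : Countable Path
  r : Path → Obj
  s : Path → Obj
  d : Path → Fin k → ℕ
  comp : Path → Path → Path
  ident : Obj → Path
  r_ident : ∀ v, r (ident v) = v
  s_ident : ∀ v, s (ident v) = v
  d_ident : ∀ v, d (ident v) = 0
  r_comp : ∀ μ ν, s μ = r ν → r (comp μ ν) = r μ
  s_comp : ∀ μ ν, s μ = r ν → s (comp μ ν) = s ν
  d_comp : ∀ μ ν, s μ = r ν → d (comp μ ν) = d μ + d ν
  ident_comp : ∀ lam, comp (ident (r lam)) lam = lam
  comp_ident : ∀ lam, comp lam (ident (s lam)) = lam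
  comp_assoc : ∀ lam μ ν, s lam = r μ → s μ = r ν →
    comp (comp lam μ) ν = comp lam (comp μ ν)
  factor : ∀ (lam : Path) (m n : Fin k → ℕ), d lam = m + n →
    ∃! p : Path × Path, s p.1 = r p.2 ∧ d p.1 = m ∧ d p.2 = n ∧ lam = comp p.1 p.2

/-- The `i`-th standard generator `e_i` of `ℕᵏ`. -/
def eVec {k : ℕ} (i : Fin k) : Fin k → ℕ := Pi.single i 1

namespace KGraph

variable {k : ℕ} (G : KGraph k)

/-- `lam` extends `μ`, i.e. `lam ∈ μΛ`. -/
def Extends (lam μ : G.Path) : Prop := ∃ α, G.s μ = G.r α ∧ lam = G.comp μ α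

/-- `CE(μ,ν)`: common extensions of `μ` and `ν`. -/
def CE (μ ν : G.Path) : Set G.Path := {lam | G.Extends lam μ ∧ G.Extends lam ν}

/-- `MCE(μ,ν)`: minimal common extensions of `μ` and `ν` (degree `d μ ⊔ d ν`). -/
def MCE (μ ν : G.Path) : Set G.Path :=
  {lam | lam ∈ G.CE μ ν ∧ G.d lam = G.d μ ⊔ G.d ν}

/-- `Λ^min(μ,ν)`: pairs `(α,β)` with `μα = νβ ∈ MCE(μ,ν)`. -/
def minPairs (μ ν : G.Path) : Set (G.Path × G.Path) :=
  {p | G.s μ = G.r p.1 ∧ G.s ν = G.r p.2 ∧ G.comp μ p.1 = G.comp ν p.2 ∧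
    G.comp μ p.1 ∈ G.MCE μ ν}

/-- `Λ` is finitely aligned if each `Λ^min(μ,ν)` is finite. -/
def FinitelyAligned : Prop := ∀ μ ν : G.Path, (G.minPairs μ ν).Finite

/-- `Λ` is locally-convex. -/
def LocallyConvex : Prop :=
  ∀ (i j : Fin k), i ≠ j → ∀ lam μ : G.Path,
    G.d lam = eVec i → G.d μ = eVec j → G.r lam = G.r μ →
    (∃ η, G.d η = eVec j ∧ G.r η = G.s lam) ∧
    (∃ η, G.d η = eVec i ∧ G.r η = G.s μ)

/-- `Λ^{≤ n}`. -/
def LeSet (n : Fin k → ℕ) : Set G.Path :=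
  {lam | G.d lam ≤ n ∧
    ∀ i, G.d lam i < n i → ¬∃ η, G.d η = eVec i ∧ G.r η = G.s lam}

open Classical in
/-- Split a path `lam` at degree `m ≤ d lam` into `(lam(0,m), lam(m, d lam))`. -/
noncomputable def split (lam : G.Path) (m : Fin k → ℕ) : G.Path × G.Path :=
  if h : m ≤ G.d lam then
    (G.factor lam m (G.d lam - m)
      (funext fun i => (Nat.add_sub_cancel' ((Pi.le_def.mp h) i)).symm)).exists.choose
  else (lam, lam)

/-- The segment `lam(m,n)` (for `m ≤ n ≤ d lam`), of degree `n - m`. -/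
noncomputable def seg (lam : G.Path) (m n : Fin k → ℕ) : G.Path :=
  (G.split (G.split lam n).1 m).2

end KGraph

/-- A Toeplitz–Cuntz–Krieger `Λ`-family in a `*`-ring (in applications, a
C*-algebra), for a finitely aligned `k`-graph: (TCK1) the vertex elements are
mutually orthogonal (self-adjoint, idempotent) projections; (TCK2)
`t_μ t_ν = t_{μν}` when `s μ = r ν`; (TCK3)
`t_μ* t_ν = ∑_{(α,β) ∈ Λ^min(μ,ν)} t_α t_β*`. -/
structure TCKFamily {k : ℕ} (G : KGraph k) (hfa : G.FinitelyAligned)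
    (A : Type*) [NonUnitalRing A] [StarRing A] where
  t : G.Path → A
  star_vertex : ∀ v, star (t (G.ident v)) = t (G.ident v)
  mul_vertex : ∀ v, t (G.ident v) * t (G.ident v) = t (G.ident v)
  orth_vertex : ∀ v w, v ≠ w → t (G.ident v) * t (G.ident w) = 0
  mul_comp : ∀ μ ν, G.s μ = G.r ν → t (G.comp μ ν) = t μ * t ν
  tck3 : ∀ μ ν, star (t μ) * t ν =
    ∑ p ∈ (hfa μ ν).toFinset, t p.1 * star (t p.2)

/-- The product `Δ(t)^L := ∏_{lam ∈ L} (t_v - t_lam t_lam*)` along an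
enumeration `L` of a finite subset of `vΛ`.  (It is realised as a fold with
unit `t_v`; since every factor is a subprojection of `t_v`, this agrees with
the usual product for a nonempty enumeration.) -/
def deltaProd {k : ℕ} (G : KGraph k) {A : Type*} [NonUnitalRing A] [StarRing A]
    (t : G.Path → A) (v : G.Obj) (L : List G.Path) : A :=
  L.foldr (fun lam x => (t (G.ident v) - t lam * star (t lam)) * x) (t (G.ident v))

/-- `MCE(F)` for a finite set `F` of paths: the common extensions of all
elements of `F` of degree `⋁_{ν ∈ F} d ν`. -/
def MCEset {k : ℕ} (G : KGraph k) (F : Finset G.Path) : Set G.Path :=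
  {lam | (∀ ν ∈ F, G.Extends lam ν) ∧ G.d lam = F.sup G.d}

namespace KGraph

variable {k : ℕ} {G : KGraph k}

theorem factor_unique {lam μ α μ' α' : G.Path}
    (h1 : G.s μ = G.r α) (h2 : G.s μ' = G.r α')
    (hc : G.comp μ α = lam) (hc' : G.comp μ' α' = lam)
    (hd : G.d μ = G.d μ') : μ = μ' ∧ α = α' := by
  have hdl : G.d lam = G.d μ + G.d α := by rw [← hc, G.d_comp _ _ h1]
  have hdl' : G.d lam = G.d μ' + G.d α' := by rw [← hc', G.d_comp _ _ h2]
  have hda : G.d α' = G.d α := by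
    have h3 := hdl.symm.trans hdl'
    rw [hd] at h3
    exact (add_left_cancel h3).symm
  obtain ⟨p, hp, hup⟩ := G.factor lam (G.d μ) (G.d α) hdl
  have e1 : (μ, α) = p := hup (μ, α) ⟨h1, rfl, rfl, hc.symm⟩
  have e2 : (μ', α') = p := hup (μ', α') ⟨h2, hd.symm, hda, hc'.symm⟩
  have := e1.trans e2.symm
  exact ⟨congrArg Prod.fst this, congrArg Prod.snd this⟩

theorem eq_ident_of_d_eq_zero {α : G.Path} (h : G.d α = 0) :
    α = G.ident (G.r α) := by
  have h1 : G.s (G.ident (G.r α)) = G.r α := G.s_ident _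
  have h2 : G.s α = G.r (G.ident (G.s α)) := (G.r_ident _).symm
  have hc : G.comp (G.ident (G.r α)) α = α := G.ident_comp α
  have hc' : G.comp α (G.ident (G.s α)) = α := G.comp_ident α
  have hd : G.d (G.ident (G.r α)) = G.d α := by rw [G.d_ident, h]
  exact ((factor_unique h1 h2 hc hc' hd).1).symm

theorem extends_refl (lam : G.Path) : G.Extends lam lam :=
  ⟨G.ident (G.s lam), (G.r_ident _).symm, (G.comp_ident lam).symm⟩

theorem r_eq_of_extends {lam μ : G.Path} (h : G.Extends lam μ) :
    G.r lam = G.r μ := by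
  obtain ⟨α, hs, he⟩ := h
  rw [he, G.r_comp _ _ hs]

theorem d_le_of_extends {lam μ : G.Path} (h : G.Extends lam μ) :
    G.d μ ≤ G.d lam := by
  obtain ⟨α, hs, he⟩ := h
  rw [he, G.d_comp _ _ hs]
  exact le_self_add

theorem extends_trans {lam μ ν : G.Path} (h1 : G.Extends lam μ)
    (h2 : G.Extends μ ν) : G.Extends lam ν := by
  obtain ⟨α, hsα, hα⟩ := h1
  obtain ⟨β, hsβ, hβ⟩ := h2
  have hβα : G.s β = G.r α := by
    rw [← G.s_comp _ _ hsβ, ← hβ]; exact hsα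
  refine ⟨G.comp β α, ?_, ?_⟩
  · rw [G.r_comp _ _ hβα]; exact hsβ
  · rw [hα, hβ, G.comp_assoc _ _ _ hsβ hβα]

theorem eq_of_extends_of_d_eq {lam μ : G.Path} (h : G.Extends lam μ)
    (hd : G.d lam = G.d μ) : lam = μ := by
  obtain ⟨α, hs, he⟩ := h
  have hda : G.d α = 0 := by
    have h3 : G.d μ = G.d μ + G.d α := by rw [← G.d_comp _ _ hs, ← he, hd]
    exact (left_eq_add.mp h3)
  have : α = G.ident (G.s μ) := by rw [eq_ident_of_d_eq_zero hda, ← hs]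
  rw [he, this, G.comp_ident]

theorem split_spec {lam : G.Path} {m : Fin k → ℕ} (h : m ≤ G.d lam) :
    G.s (G.split lam m).1 = G.r (G.split lam m).2 ∧ G.d (G.split lam m).1 = m ∧
      lam = G.comp (G.split lam m).1 (G.split lam m).2 := by
  unfold KGraph.split
  rw [dif_pos h]
  obtain ⟨h1, h2, h3, h4⟩ := (G.factor lam m (G.d lam - m)
      (funext fun i => (Nat.add_sub_cancel' ((Pi.le_def.mp h) i)).symm)).exists.choose_spec
  exact ⟨h1, h2, h4⟩

theorem split_fst_eq {lam μ : G.Path} {m : Fin k → ℕ} (h : G.Extends lam μ)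
    (hd : G.d μ = m) : (G.split lam m).1 = μ := by
  obtain ⟨α, hs, he⟩ := h
  have hm : m ≤ G.d lam := hd ▸ d_le_of_extends ⟨α, hs, he⟩
  obtain ⟨s1, s2, s3⟩ := split_spec (G := G) hm
  exact (factor_unique s1 hs s3.symm he.symm (s2.trans hd.symm)).1

theorem extends_split_fst {lam : G.Path} {m : Fin k → ℕ} (h : m ≤ G.d lam) :
    G.Extends lam (G.split lam m).1 := by
  obtain ⟨s1, s2, s3⟩ := split_spec (G := G) h
  exact ⟨(G.split lam m).2, s1, s3⟩

/-- Initial segments inherit extension relations. -/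
theorem split_fst_extends {lam ν : G.Path} {m : Fin k → ℕ}
    (h : G.Extends lam ν) (hν : G.d ν ≤ m) (hm : m ≤ G.d lam) :
    G.Extends (G.split lam m).1 ν := by
  obtain ⟨α, hs, he⟩ := h
  have hdα : m - G.d ν ≤ G.d α := by
    intro i
    have h1 : G.d lam i = G.d ν i + G.d α i := by
      rw [he, G.d_comp _ _ hs]; rfl
    have h2 := Pi.le_def.mp hm i
    have h3 := Pi.le_def.mp hν i
    show m i - G.d ν i ≤ G.d α i
    omega
  obtain ⟨s1, s2, s3⟩ := split_spec (G := G) hdα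
  set α₁ := (G.split α (m - G.d ν)).1
  set α₂ := (G.split α (m - G.d ν)).2
  have hrα₁ : G.r α₁ = G.r α := by rw [s3, G.r_comp _ _ s1]
  have hsν : G.s ν = G.r α₁ := by rw [hrα₁]; exact hs
  have hassoc : lam = G.comp (G.comp ν α₁) α₂ := by
    rw [he, s3, G.comp_assoc _ _ _ hsν s1]
  have hsc : G.s (G.comp ν α₁) = G.r α₂ := by rw [G.s_comp _ _ hsν]; exact s1
  have hdc : G.d (G.comp ν α₁) = m := by
    rw [G.d_comp _ _ hsν, s2]
    funext i
    exact Nat.add_sub_cancel' (hν i)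
  have hext : G.Extends lam (G.comp ν α₁) := ⟨α₂, hsc, hassoc⟩
  have := split_fst_eq hext hdc
  rw [this]
  exact ⟨α₁, hsν, rfl⟩

end KGraph
theorem MCEset_singleton {k : ℕ} (G : KGraph k) (μ : G.Path) :
    MCEset G {μ} = {μ} := by
  ext lam
  simp only [Set.mem_singleton_iff]
  constructor
  · rintro ⟨h1, h2⟩
    have hd : G.d lam = G.d μ := by rwa [Finset.sup_singleton] at h2
    exact KGraph.eq_of_extends_of_d_eq (h1 μ (Finset.mem_singleton_self μ)) hd
  · rintro rfl
    refine ⟨fun ν hν => ?_, by rw [Finset.sup_singleton]⟩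
    rw [Finset.mem_singleton] at hν
    rw [hν]
    exact KGraph.extends_refl lam

theorem toFinset_congr' {α : Type*} {s : Set α} (h h' : s.Finite) :
    h.toFinset = h'.toFinset :=
  Finset.coe_injective (by simp)

section Alg

variable {k : ℕ} {G : KGraph k} {hfa : G.FinitelyAligned}
  {A : Type*} [NonUnitalRing A] [StarRing A] (T : TCKFamily G hfa A)

/-- abbreviation for the range projections -/
def qq (lam : G.Path) : A := T.t lam * star (T.t lam)

theorem qq_def (lam : G.Path) : qq T lam = T.t lam * star (T.t lam) := rfl

theorem tv_mul_t {lam : G.Path} {v : G.Obj} (h : G.r lam = v) :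
    T.t (G.ident v) * T.t lam = T.t lam := by
  subst h
  conv_rhs => rw [← G.ident_comp lam]
  rw [T.mul_comp _ _ (G.s_ident _)]

theorem tv_mul_qq {lam : G.Path} {v : G.Obj} (h : G.r lam = v) :
    T.t (G.ident v) * qq T lam = qq T lam := by
  rw [qq_def, ← mul_assoc, tv_mul_t T h]

theorem qq_mul_tv {lam : G.Path} {v : G.Obj} (h : G.r lam = v) :
    qq T lam * T.t (G.ident v) = qq T lam := by
  rw [qq_def, mul_assoc]
  congr 1
  rw [← T.star_vertex v, ← star_mul, tv_mul_t T h]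

theorem qq_mul_qq (μ lam : G.Path) :
    qq T μ * qq T lam = ∑ p ∈ (hfa μ lam).toFinset, qq T (G.comp μ p.1) := by
  have h0 : qq T μ * qq T lam
      = T.t μ * (star (T.t μ) * T.t lam) * star (T.t lam) := by
    rw [qq_def, qq_def, mul_assoc, mul_assoc, mul_assoc]
  rw [h0, T.tck3, Finset.mul_sum, Finset.sum_mul]
  refine Finset.sum_congr rfl fun p hp => ?_
  rw [Set.Finite.mem_toFinset] at hp
  obtain ⟨hp1, hp2, hp3, _⟩ := hp
  calc T.t μ * (T.t p.1 * star (T.t p.2)) * star (T.t lam)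
      = (T.t μ * T.t p.1) * (star (T.t p.2) * star (T.t lam)) := by
        rw [mul_assoc, mul_assoc, mul_assoc]
    _ = T.t (G.comp μ p.1) * star (T.t (G.comp lam p.2)) := by
        rw [T.mul_comp _ _ hp1, T.mul_comp _ _ hp2, star_mul]
    _ = qq T (G.comp μ p.1) := by rw [← hp3, qq_def]

open Classical in
theorem qq_mul_sum_MCE (μ : G.Path) (Gs : Finset G.Path)
    (h1 : (MCEset G Gs).Finite) (h2 : (MCEset G (insert μ Gs)).Finite) :
    qq T μ * ∑ lam ∈ h1.toFinset, qq T lam = ∑ tau ∈ h2.toFinset, qq T tau := by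
  classical
  set m := Gs.sup G.d with hm
  rw [Finset.mul_sum]
  have hcong : ∀ lam ∈ h1.toFinset, qq T μ * qq T lam
      = ∑ p ∈ (hfa μ lam).toFinset, qq T (G.comp μ p.1) :=
    fun lam _ => qq_mul_qq T μ lam
  rw [Finset.sum_congr rfl hcong,
    Finset.sum_sigma' h1.toFinset (fun lam => (hfa μ lam).toFinset)
      (fun lam p => qq T (G.comp μ p.1))]
  refine Finset.sum_nbij (fun x => G.comp μ x.2.1) ?_ ?_ ?_ (fun a _ => rfl)
  · rintro ⟨lam, p⟩ hx
    rw [Finset.mem_sigma, Set.Finite.mem_toFinset, Set.Finite.mem_toFinset] at hx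
    obtain ⟨⟨hext, hd⟩, hp1, hp2, hp3, ⟨_, hdmin⟩⟩ := hx
    rw [Set.Finite.mem_toFinset]
    constructor
    · intro ν hν
      rcases Finset.mem_insert.mp hν with rfl | hν
      · exact ⟨p.1, hp1, rfl⟩
      · exact KGraph.extends_trans ⟨p.2, hp2, hp3⟩ (hext ν hν)
    · rw [Finset.sup_insert, hdmin, hd]
  · rintro ⟨lam, p⟩ hx ⟨lam', p'⟩ hy hxy
    simp only [Finset.coe_sigma, Set.mem_sigma_iff, Finset.mem_coe,
      Set.Finite.mem_toFinset] at hx hy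
    obtain ⟨⟨hext, hd⟩, hp1, hp2, hp3, _⟩ := hx
    obtain ⟨⟨hext', hd'⟩, hp1', hp2', hp3', _⟩ := hy
    dsimp only at hxy
    have hlam : lam = lam' := by
      have e1 : (G.split (G.comp μ p.1) m).1 = lam :=
        KGraph.split_fst_eq ⟨p.2, hp2, hp3⟩ hd
      have e2 : (G.split (G.comp μ p'.1) m).1 = lam' :=
        KGraph.split_fst_eq ⟨p'.2, hp2', hp3'⟩ hd'
      rw [← e1, ← e2, hxy]
    subst hlam
    have heq1 : p.1 = p'.1 :=
      (KGraph.factor_unique hp1 hp1' hxy rfl rfl).2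
    have heq2 : p.2 = p'.2 :=
      (KGraph.factor_unique hp2 hp2' hp3.symm (hxy.trans hp3').symm rfl).2
    simp [Prod.ext_iff, heq1, heq2]
  · intro tau htau
    simp only [Finset.coe_sigma, Finset.mem_coe, Set.Finite.mem_toFinset] at htau
    obtain ⟨hext, hdt⟩ := htau
    have hdt' : G.d tau = G.d μ ⊔ m := by rwa [Finset.sup_insert] at hdt
    have hmle : m ≤ G.d tau := hdt' ▸ le_sup_right
    set lam := (G.split tau m).1 with hlam
    obtain ⟨s1, s2, s3⟩ := KGraph.split_spec (G := G) hmle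
    have hlamMCE : lam ∈ MCEset G Gs := by
      refine ⟨fun ν hν => ?_, s2⟩
      exact KGraph.split_fst_extends (hext ν (Finset.mem_insert_of_mem hν))
        (hm ▸ Finset.le_sup hν) hmle
    obtain ⟨α, hsα, hα⟩ := hext μ (Finset.mem_insert_self μ Gs)
    have hβ : G.Extends tau lam := ⟨(G.split tau m).2, s1, s3⟩
    refine ⟨⟨lam, (α, (G.split tau m).2)⟩, ?_, hα.symm⟩
    simp only [Finset.coe_sigma, Set.mem_sigma_iff, Finset.mem_coe,
      Set.Finite.mem_toFinset]
    refine ⟨hlamMCE, hsα, s1, by rw [← hα, ← s3], ?_⟩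
    rw [← hα]
    exact ⟨⟨⟨α, hsα, hα⟩, hβ⟩, by rw [s2, hdt']⟩

end Alg
open Classical in
/-- The sum `∑_{lam ∈ MCE(Gs)} t_lam t_lam*`, with the convention `t_v` for `Gs = ∅`
and junk value `0` when `MCE(Gs)` is infinite. -/
noncomputable def Ssum {k : ℕ} (G : KGraph k) {A : Type*} [NonUnitalRing A] [StarRing A]
    (t : G.Path → A) (v : G.Obj) (Gs : Finset G.Path) : A :=
  if Gs = ∅ then t (G.ident v)
  else if h : (MCEset G Gs).Finite then ∑ lam ∈ h.toFinset, t lam * star (t lam) else 0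

section Alg2

variable {k : ℕ} {G : KGraph k} {hfa : G.FinitelyAligned}
  {A : Type*} [NonUnitalRing A] [StarRing A] (T : TCKFamily G hfa A)

theorem tv_mul_Ssum {v : G.Obj} (Gs : Finset G.Path) (hv : ∀ ν ∈ Gs, G.r ν = v) :
    T.t (G.ident v) * Ssum G T.t v Gs = Ssum G T.t v Gs := by
  by_cases hGs : Gs = ∅
  · rw [Ssum, if_pos hGs, T.mul_vertex]
  · rw [Ssum, if_neg hGs]
    split_ifs with h
    · rw [Finset.mul_sum]
      refine Finset.sum_congr rfl fun tau htau => ?_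
      rw [Set.Finite.mem_toFinset] at htau
      obtain ⟨ν₀, hν₀⟩ := Finset.nonempty_iff_ne_empty.mpr hGs
      have hr : G.r tau = v := by
        rw [KGraph.r_eq_of_extends (htau.1 ν₀ hν₀)]
        exact hv ν₀ hν₀
      exact tv_mul_qq T hr
    · rw [mul_zero]

open Classical in
theorem qq_mul_Ssum {v : G.Obj} {μ : G.Path} (hμ : G.r μ = v) (Gs : Finset G.Path)
    (h1 : Gs ≠ ∅ → (MCEset G Gs).Finite)
    (h2 : (MCEset G (insert μ Gs)).Finite) :
    qq T μ * Ssum G T.t v Gs = Ssum G T.t v (insert μ Gs) := by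
  classical
  have hins : insert μ Gs ≠ ∅ := (Finset.insert_nonempty _ _).ne_empty
  conv_rhs => rw [Ssum]
  rw [if_neg hins, dif_pos h2]
  by_cases hGs : Gs = ∅
  · subst hGs
    rw [Ssum, if_pos rfl, qq_mul_tv T hμ]
    have he : h2.toFinset = {μ} := by
      apply Finset.coe_injective
      rw [Set.Finite.coe_toFinset]
      simp only [LawfulSingleton.insert_empty_eq, Finset.coe_singleton]
      exact MCEset_singleton G μ
    rw [he, Finset.sum_singleton, qq_def]
  · rw [Ssum, if_neg hGs, dif_pos (h1 hGs)]
    exact qq_mul_sum_MCE T μ Gs (h1 hGs) h2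

open Classical in
theorem deltaProd_eq (v : G.Obj) (L : List G.Path) (hnd : L.Nodup)
    (hv : ∀ lam ∈ L, G.r lam = v)
    (hfin : ∀ Gs : Finset G.Path, Gs ⊆ L.toFinset → Gs.Nonempty →
      (MCEset G Gs).Finite) :
    deltaProd G T.t v L =
      ∑ Gs ∈ L.toFinset.powerset, (-1 : ℤ) ^ Gs.card • Ssum G T.t v Gs := by
  classical
  induction L with
  | nil =>
    simp only [List.toFinset_nil, Finset.powerset_empty, Finset.sum_singleton,
      Finset.card_empty, pow_zero, one_smul]
    rw [Ssum, if_pos rfl]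
    rfl
  | cons μ L ih =>
    rw [List.nodup_cons] at hnd
    have hμL : μ ∉ L.toFinset := by
      rw [List.mem_toFinset]; exact hnd.1
    have hsub : L.toFinset ⊆ (μ :: L).toFinset := by
      rw [List.toFinset_cons]; exact Finset.subset_insert _ _
    have hIH := ih hnd.2 (fun lam hl => hv lam (List.mem_cons_of_mem _ hl))
      (fun Gs hGs hne => hfin Gs (hGs.trans hsub) hne)
    have hdp : deltaProd G T.t v (μ :: L)
        = (T.t (G.ident v) - qq T μ) * deltaProd G T.t v L := rfl
    rw [hdp, hIH, Finset.mul_sum, List.toFinset_cons,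
      Finset.sum_powerset_insert hμL]
    rw [← Finset.sum_add_distrib]
    refine Finset.sum_congr rfl fun Gs hGs => ?_
    rw [Finset.mem_powerset] at hGs
    have hμGs : μ ∉ Gs := fun h => hμL (hGs h)
    have hvGs : ∀ ν ∈ Gs, G.r ν = v := fun ν hν => by
      have : ν ∈ L := List.mem_toFinset.mp (hGs hν)
      exact hv ν (List.mem_cons_of_mem _ this)
    have hμv : G.r μ = v := hv μ (List.mem_cons_self)
    have hfin1 : Gs ≠ ∅ → (MCEset G Gs).Finite := fun h =>
      hfin Gs (hGs.trans hsub) (Finset.nonempty_iff_ne_empty.mpr h)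
    have hfin2 : (MCEset G (insert μ Gs)).Finite := by
      refine hfin (insert μ Gs) ?_ (Finset.insert_nonempty _ _)
      rw [List.toFinset_cons]
      exact Finset.insert_subset_insert μ hGs
    rw [sub_mul, mul_smul_comm, mul_smul_comm,
      tv_mul_Ssum T Gs hvGs, qq_mul_Ssum T hμv Gs hfin1 hfin2,
      Finset.card_insert_of_notMem hμGs, pow_succ, mul_neg_one, neg_smul,
      sub_eq_add_neg]

end Alg2
open Classical in
/-- for a Toeplitz–Cuntz–Krieger `Λ`-family `{t_lam}` in a
C*-algebra, a vertex `v` and a nonempty finite `F ⊆ vΛ`,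
`∏_{lam ∈ F}(t_v - t_lam t_lam*) = t_v + ∑_{∅ ≠ Gs ⊆ F} ∑_{lam ∈ MCE(Gs)} (-1)^{|Gs|} t_lam t_lam*`
(the product taken along any enumeration `L` of `F`).  Finiteness of each
`MCE(Gs)` — a consequence of finite alignment — is supplied by `hMCE` so that
the right-hand sums can be formed. -/
theorem stmt13 {k : ℕ} (G : KGraph k) (hfa : G.FinitelyAligned)
    {A : Type*} [NonUnitalNormedRing A] [StarRing A] [CStarRing A]
    [NormedSpace ℂ A] [IsScalarTower ℂ A A] [SMulCommClass ℂ A A]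
    [StarModule ℂ A] [CompleteSpace A]
    (T : TCKFamily G hfa A) (v : G.Obj)
    (F : Finset G.Path) (hF : F.Nonempty) (hFv : ∀ lam ∈ F, G.r lam = v)
    (hMCE : ∀ Gs : Finset G.Path, Gs ⊆ F → Gs.Nonempty → (MCEset G Gs).Finite)
    (L : List G.Path) (hL : L.Nodup) (hLF : L.toFinset = F) :
    deltaProd G T.t v L =
      T.t (G.ident v) +
        ∑ Gs ∈ (F.powerset.filter Finset.Nonempty).attach,
          ((-1 : ℤ) ^ Gs.1.card) •
            ∑ lam ∈ (hMCE Gs.1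
                (Finset.mem_powerset.mp (Finset.mem_filter.mp Gs.2).1)
                (Finset.mem_filter.mp Gs.2).2).toFinset,
              T.t lam * star (T.t lam) := by

  classical
  have hv : ∀ lam ∈ L, G.r lam = v := fun lam hl =>
    hFv lam (hLF ▸ List.mem_toFinset.mpr hl)
  have hfin : ∀ Gs : Finset G.Path, Gs ⊆ L.toFinset → Gs.Nonempty →
      (MCEset G Gs).Finite := fun Gs hGs hne => hMCE Gs (hLF ▸ hGs) hne
  rw [deltaProd_eq T v L hL hv hfin, hLF]
  have hsplit : F.powerset = insert ∅ (F.powerset.filter Finset.Nonempty) := by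
    ext Gs
    by_cases h : Gs = ∅ <;>
      simp [h, Finset.nonempty_iff_ne_empty, Finset.empty_subset]
  have hnot : (∅ : Finset G.Path) ∉ F.powerset.filter Finset.Nonempty := by
    simp [Finset.not_nonempty_empty]
  conv_lhs => rw [hsplit]
  rw [Finset.sum_insert hnot, Finset.card_empty, pow_zero, one_smul,
    Ssum, if_pos rfl]
  congr 1
  rw [← Finset.sum_attach (F.powerset.filter Finset.Nonempty)
    (fun Gs => (-1 : ℤ) ^ Gs.card • Ssum G T.t v Gs)]
  refine Finset.sum_congr rfl fun x _ => ?_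
  have hx := x.2
  rw [Finset.mem_filter] at hx
  have hne : x.1 ≠ ∅ := Finset.nonempty_iff_ne_empty.mp hx.2
  have hf : (MCEset G x.1).Finite := hMCE x.1 (Finset.mem_powerset.mp hx.1) hx.2
  rw [Ssum, if_neg hne, dif_pos hf,
    toFinset_congr' hf (hMCE x.1 (Finset.mem_powerset.mp (Finset.mem_filter.mp x.2).1)
      (Finset.mem_filter.mp x.2).2)]
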